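/- Let G be a path on vertices v_1,…,v_m, let N be a finite set of agents with |N| ≥ 2, each having an additive valuation with nonnegative item values, and let i ∈ N be an agent with u_i({v_1}) > 0. Let k be the largest index with u_i({v_k}) > 0 and set V_i = {v_1,…,v_k}. If π is a connected allocation of G among N with π(i) = V_i whose restriction to N∖{i} is a Pareto-optimal connected allocation of the subpath on {v_{k+1},…,v_m} among the agents N∖{i}, then π is a Pareto-optimal connected allocation of G among N. -/

import Mathlib

open Finset

/-- A finite set of items is *connected* in the item graph `G` if the induced
subgraph is preconnected (the empty set counts as connected). -/
def ConnSet {V : Type*} (G : SimpleGraph V) (X : Finset V) : Prop :=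
  (G.induce (X : Set V)).Preconnected

/-- `π` is a connected allocation of the items in `R` among the agents in `N`. -/
def IsConnAllocOn {V N : Type*} [DecidableEq V] (G : SimpleGraph V)
    (R : Finset V) (π : N → Finset V) : Prop :=
  (∀ i, π i ⊆ R) ∧ (∀ i, ConnSet G (π i)) ∧
    (∀ i j, i ≠ j → Disjoint (π i) (π j)) ∧ (∀ v ∈ R, ∃ i, v ∈ π i)

/-- `π` is a connected allocation of all items among the agents in `N`. -/
def IsConnAlloc {V N : Type*} [Fintype V] [DecidableEq V] (G : SimpleGraph V)
    (π : N → Finset V) : Prop :=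
  IsConnAllocOn G Finset.univ π

/-- `π'` is a Pareto-improvement of `π`. -/
def ParetoImproves {V N : Type*} (u : N → Finset V → ℝ)
    (π' π : N → Finset V) : Prop :=
  (∀ i, u i (π i) ≤ u i (π' i)) ∧ ∃ i, u i (π i) < u i (π' i)

/-- `π` is Pareto-optimal: no connected allocation Pareto-improves it. -/
def ParetoOptimal {V N : Type*} [Fintype V] [DecidableEq V] (G : SimpleGraph V)
    (u : N → Finset V → ℝ) (π : N → Finset V) : Prop :=
  ∀ π', IsConnAlloc G π' → ¬ ParetoImproves u π' π

/-- `π` satisfies EF1: any envy can be removed by deleting a single item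
(keeping the envied bundle connected). -/
def EF1 {V N : Type*} [Fintype V] [DecidableEq V] (G : SimpleGraph V)
    (u : N → Finset V → ℝ) (π : N → Finset V) : Prop :=
  ∀ i j, u i (π j) ≤ u i (π i) ∨
    ∃ v ∈ π j, ConnSet G ((π j).erase v) ∧ u i ((π j).erase v) ≤ u i (π i)

/-- The maximin fair share of an agent with valuation `u`, when the items are
divided into `|N|` connected bundles. -/
noncomputable def mmsVal {V : Type*} (N : Type*) [Fintype V] [DecidableEq V]
    (G : SimpleGraph V) (u : Finset V → ℝ) : ℝ :=
  sSup {x : ℝ | ∃ P : N → Finset V, IsConnAlloc G P ∧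
    x = sInf (Set.range fun j => u (P j))}

/-- `π` is an MMS allocation: every agent gets at least her maximin fair share. -/
def IsMMS {V N : Type*} [Fintype V] [DecidableEq V] (G : SimpleGraph V)
    (u : N → Finset V → ℝ) (π : N → Finset V) : Prop :=
  ∀ i, mmsVal N G (u i) ≤ u i (π i)

lemma pg_walk_mem {m : ℕ} {X : Finset (Fin m)} :
    ∀ {a b : ↥((X : Set (Fin m)))}
      (_ : ((SimpleGraph.pathGraph m).induce (X : Set (Fin m))).Walk a b)
      (y : Fin m), (a : Fin m) ≤ y → y ≤ (b : Fin m) → y ∈ X := by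
  intro a b p
  induction p with
  | @nil a =>
    intro y h1 h2
    have : y = (a : Fin m) := le_antisymm h2 h1
    subst this
    exact Finset.mem_coe.mp a.2
  | @cons a c b h p ih =>
    intro y h1 h2
    have hadj : (SimpleGraph.pathGraph m).Adj (a : Fin m) (c : Fin m) := h
    rw [SimpleGraph.pathGraph_adj] at hadj
    by_cases hy : y = (a : Fin m)
    · subst hy; exact Finset.mem_coe.mp a.2
    · have hlt : (a : Fin m) < y := lt_of_le_of_ne h1 (Ne.symm hy)
      apply ih y _ h2
      rw [Fin.le_def]
      rw [Fin.lt_def] at hlt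
      rcases hadj with h' | h' <;> omega

lemma pg_conn_interval {m : ℕ} {X : Finset (Fin m)}
    (hX : ConnSet (SimpleGraph.pathGraph m) X) {x y z : Fin m}
    (hx : x ∈ X) (hz : z ∈ X) (h1 : x ≤ y) (h2 : y ≤ z) : y ∈ X := by
  obtain ⟨p⟩ := hX ⟨x, Finset.mem_coe.mpr hx⟩ ⟨z, Finset.mem_coe.mpr hz⟩
  exact pg_walk_mem p y h1 h2

lemma pg_interval_conn {m : ℕ} {X : Finset (Fin m)}
    (hX : ∀ ⦃x y z : Fin m⦄, x ∈ X → z ∈ X → x ≤ y → y ≤ z → y ∈ X) :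
    ConnSet (SimpleGraph.pathGraph m) X := by
  have aux : ∀ n : ℕ, ∀ a b : ↥((X : Set (Fin m))), (b : Fin m).val = (a : Fin m).val + n →
      ((SimpleGraph.pathGraph m).induce (X : Set (Fin m))).Reachable a b := by
    intro n
    induction n with
    | zero =>
      intro a b h
      have : a = b := Subtype.ext (Fin.ext (by omega))
      subst this; rfl
    | succ n ih =>
      intro a b h
      have hlt : (a : Fin m).val + 1 < m := by
        have := (b : Fin m).isLt; omega
      set c : Fin m := ⟨(a : Fin m).val + 1, hlt⟩ with hc
      have hcX : c ∈ X := by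
        refine hX (Finset.mem_coe.mp a.2) (Finset.mem_coe.mp b.2) ?_ ?_
        · rw [Fin.le_def]; simp [hc]
        · rw [Fin.le_def]; show (a : Fin m).val + 1 ≤ (b : Fin m).val; omega
      have hadj : ((SimpleGraph.pathGraph m).induce (X : Set (Fin m))).Adj a
          ⟨c, Finset.mem_coe.mpr hcX⟩ := by
        show (SimpleGraph.pathGraph m).Adj (a : Fin m) c
        rw [SimpleGraph.pathGraph_adj]; left; rfl
      exact hadj.reachable.trans (ih ⟨c, Finset.mem_coe.mpr hcX⟩ b (by simp [hc]; omega))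
  intro a b
  rcases le_total (a : Fin m) (b : Fin m) with h | h
  · exact aux ((b : Fin m).val - (a : Fin m).val) a b (by rw [Fin.le_def] at h; omega)
  · exact (aux ((a : Fin m).val - (b : Fin m).val) b a (by rw [Fin.le_def] at h; omega)).symm


/-- correctness of the recursive step of the path algorithm.
If agent `i` positively values the left-most vertex, receives the minimal
prefix bundle `V_i = {v : v ≤ k}` covering all items she values positively
(where `k` is the largest index she values positively), and the restriction
of `π` to the other agents is a Pareto-optimal connected allocation of the
remaining subpath `{v : k < v}`, then `π` is Pareto-optimal. -/
theorem stmt0 {m : ℕ} {N : Type*} [Fintype N] [DecidableEq N]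
    (hm : 0 < m) (hN : 2 ≤ Fintype.card N)
    (w : N → Fin m → ℝ) (hw : ∀ i v, 0 ≤ w i v)
    (u : N → Finset (Fin m) → ℝ)
    (hu : ∀ i X, ConnSet (SimpleGraph.pathGraph m) X → u i X = ∑ v ∈ X, w i v)
    (i : N) (hi1 : 0 < w i ⟨0, hm⟩)
    (k : Fin m) (hk : 0 < w i k) (hkmax : ∀ v, 0 < w i v → v ≤ k)
    (π : N → Finset (Fin m))
    (hπ : IsConnAlloc (SimpleGraph.pathGraph m) π)
    (hπi : π i = Finset.univ.filter (· ≤ k))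
    (hrest : IsConnAllocOn (SimpleGraph.pathGraph m)
      (Finset.univ.filter (k < ·)) (fun j : {j : N // j ≠ i} => π j.1))
    (hrestPO : ∀ π' : {j : N // j ≠ i} → Finset (Fin m),
      IsConnAllocOn (SimpleGraph.pathGraph m) (Finset.univ.filter (k < ·)) π' →
      ¬ ParetoImproves (fun j : {j : N // j ≠ i} => u j.1) π'
        (fun j : {j : N // j ≠ i} => π j.1)) :
    ParetoOptimal (SimpleGraph.pathGraph m) u π := by
  intro π' hal hPI
  obtain ⟨him, j0, hj0⟩ := hPI
  obtain ⟨hsub', hconn', hdisj', hcov'⟩ := hal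
  obtain ⟨hsubπ, hconnπ, hdisjπ, hcovπ⟩ := hπ
  set v0 : Fin m := ⟨0, hm⟩ with hv0def
  -- weights vanish beyond k
  have hw0 : ∀ v : Fin m, ¬ v ≤ k → w i v = 0 := by
    intro v hv
    refine le_antisymm ?_ (hw i v)
    by_contra h
    push_neg at h
    exact hv (hkmax v h)
  have hui_top : u i (π i) = ∑ v, w i v := by
    rw [hu i _ (hconnπ i), hπi]
    refine Finset.sum_subset (filter_subset _ _) ?_
    intro v _ hv
    exact hw0 v (by simpa using hv)
  have hui'_le : u i (π' i) ≤ ∑ v, w i v := by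
    rw [hu i _ (hconn' i)]
    exact Finset.sum_le_sum_of_subset_of_nonneg (subset_univ _) (fun v _ _ => hw i v)
  have hui'_eq : u i (π' i) = ∑ v, w i v := le_antisymm hui'_le (hui_top ▸ him i)
  have hmem_pos : ∀ v : Fin m, 0 < w i v → v ∈ π' i := by
    intro v hv
    by_contra hvn
    have hlt := Finset.sum_lt_sum_of_subset (subset_univ (π' i)) (mem_univ v) hvn hv
      (fun j _ _ => hw i j)
    rw [hu i _ (hconn' i)] at hui'_eq
    linarith
  have hv0mem : v0 ∈ π' i := hmem_pos v0 hi1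
  have hkmem : k ∈ π' i := hmem_pos k hk
  have hne : (π' i).Nonempty := ⟨k, hkmem⟩
  set t := (π' i).max' hne with htdef
  have htmem : t ∈ π' i := max'_mem _ _
  have hkt : k ≤ t := le_max' _ _ hkmem
  have hπ'i_eq : π' i = univ.filter (· ≤ t) := by
    ext v
    simp only [mem_filter, mem_univ, true_and]
    constructor
    · exact le_max' _ _
    · intro hv
      exact pg_conn_interval (hconn' i) hv0mem htmem
        (by rw [Fin.le_def]; exact Nat.zero_le _) hv
  have hgt : ∀ j, j ≠ i → ∀ v ∈ π' j, t < v := by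
    intro j hj v hv
    by_contra hle
    push_neg at hle
    have : v ∈ π' i := by rw [hπ'i_eq]; simp [hle]
    exact (Finset.disjoint_left.mp (hdisj' j i hj) hv) this
  -- choose the special agent j*
  have hjstar : ∃ js : {j : N // j ≠ i}, ∀ y : Fin m, t < y → ∃ x ∈ π' js.1, x ≤ y := by
    by_cases hcase : (t : ℕ) + 1 < m
    · set s : Fin m := ⟨(t : ℕ) + 1, hcase⟩ with hsdef
      obtain ⟨j, hjs⟩ := hcov' s (mem_univ s)
      have hji : j ≠ i := by
        intro h
        subst h
        rw [hπ'i_eq] at hjs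
        simp only [mem_filter, mem_univ, true_and] at hjs
        rw [Fin.le_def] at hjs
        simp [hsdef] at hjs
      refine ⟨⟨j, hji⟩, fun y hy => ⟨s, hjs, ?_⟩⟩
      rw [Fin.le_def]
      rw [Fin.lt_def] at hy
      simp [hsdef]
      omega
    · obtain ⟨j, hji⟩ := Fintype.exists_ne_of_one_lt_card (by omega) i
      refine ⟨⟨j, hji⟩, fun y hy => absurd hy ?_⟩
      rw [Fin.lt_def]
      have := y.isLt
      omega
  obtain ⟨js, hjs⟩ := hjstar
  set C : Finset (Fin m) := univ.filter (fun v => k < v ∧ v ≤ t) with hCdef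
  set π'' : {j : N // j ≠ i} → Finset (Fin m) :=
    fun j => if j = js then π' js.1 ∪ C else π' j.1 with hπ''def
  have hsubset'' : ∀ j, π' j.1 ⊆ π'' j := by
    intro j
    by_cases h : j = js
    · rw [h]; simp only [hπ''def, if_pos rfl]; exact subset_union_left
    · simp only [hπ''def, if_neg h]; exact subset_rfl
  have hmem'' : ∀ j, ∀ v ∈ π'' j, k < v := by
    intro j v hv
    by_cases h : j = js
    · rw [h] at hv
      simp only [hπ''def, if_pos rfl, mem_union] at hv
      rcases hv with hv | hv
      · exact lt_of_le_of_lt hkt (hgt js.1 js.2 v hv)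
      · simp only [hCdef, mem_filter] at hv
        exact hv.2.1
    · simp only [hπ''def, if_neg h] at hv
      exact lt_of_le_of_lt hkt (hgt j.1 j.2 v hv)
  have hintval : ∀ j : {j : N // j ≠ i}, ∀ ⦃x y z : Fin m⦄,
      x ∈ π'' j → z ∈ π'' j → x ≤ y → y ≤ z → y ∈ π'' j := by
    intro j x y z hx hz h1 h2
    by_cases hj : j = js
    · rw [hj] at hx hz ⊢
      by_cases hyt : y ≤ t
      · have hkx : k < x := hmem'' js x hx
        simp only [hπ''def, if_pos rfl, mem_union]
        right
        simp only [hCdef, mem_filter, mem_univ, true_and]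
        exact ⟨lt_of_lt_of_le hkx h1, hyt⟩
      · push_neg at hyt
        simp only [hπ''def, if_pos rfl, mem_union] at hz ⊢
        left
        obtain ⟨x', hx', hx'y⟩ := hjs y hyt
        have hz' : z ∈ π' js.1 := by
          rcases hz with hz | hz
          · exact hz
          · exfalso
            simp only [hCdef, mem_filter] at hz
            exact lt_irrefl t (lt_of_lt_of_le hyt (le_trans h2 hz.2.2))
        exact pg_conn_interval (hconn' js.1) hx' hz' hx'y h2
    · simp only [hπ''def, if_neg hj] at hx hz ⊢
      exact pg_conn_interval (hconn' j.1) hx hz h1 h2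
  have hconn'' : ∀ j, ConnSet (SimpleGraph.pathGraph m) (π'' j) :=
    fun j => pg_interval_conn (hintval j)
  have himp2 : ∀ j : {j : N // j ≠ i}, u j.1 (π' j.1) ≤ u j.1 (π'' j) := by
    intro j
    rw [hu _ _ (hconn' j.1), hu _ _ (hconn'' j)]
    exact Finset.sum_le_sum_of_subset_of_nonneg (hsubset'' j) (fun v _ _ => hw _ v)
  refine hrestPO π'' ⟨?_, hconn'', ?_, ?_⟩ ⟨?_, ?_⟩
  · intro j v hv
    simp only [mem_filter, mem_univ, true_and]
    exact hmem'' j v hv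
  · intro j j' hjj'
    have hne1 : j.1 ≠ j'.1 := fun h => hjj' (Subtype.ext h)
    rw [Finset.disjoint_left]
    intro v hv hv'
    have key : ∀ a b : {j : N // j ≠ i}, a.1 ≠ b.1 → v ∈ π'' a → v ∈ π' b.1 → False := by
      intro a b hab hva hvb
      by_cases ha : a = js
      · rw [ha] at hva hab
        simp only [hπ''def, if_pos rfl, mem_union] at hva
        rcases hva with hva | hva
        · exact Finset.disjoint_left.mp (hdisj' js.1 b.1 hab) hva hvb
        · simp only [hCdef, mem_filter] at hva
          exact absurd (hgt b.1 b.2 v hvb) (not_lt.mpr hva.2.2)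
      · simp only [hπ''def, if_neg ha] at hva
        exact Finset.disjoint_left.mp (hdisj' a.1 b.1 hab) hva hvb
    by_cases hj' : j' = js
    · rw [hj'] at hv' hne1
      have hj : j ≠ js := fun h => hne1 (congrArg Subtype.val h)
      simp only [hπ''def, if_neg hj] at hv
      exact key js j (Ne.symm hne1) hv' hv
    · simp only [hπ''def, if_neg hj'] at hv'
      exact key j j' hne1 hv hv'
  · intro v hv
    simp only [mem_filter, mem_univ, true_and] at hv
    by_cases hvt : v ≤ t
    · refine ⟨js, ?_⟩
      simp only [hπ''def, if_pos rfl, mem_union]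
      right
      simp only [hCdef, mem_filter, mem_univ, true_and]
      exact ⟨hv, hvt⟩
    · push_neg at hvt
      obtain ⟨j, hjv⟩ := hcov' v (mem_univ v)
      have hji : j ≠ i := by
        intro h
        subst h
        rw [hπ'i_eq] at hjv
        simp only [mem_filter, mem_univ, true_and] at hjv
        exact absurd hjv (not_le.mpr hvt)
      exact ⟨⟨j, hji⟩, hsubset'' ⟨j, hji⟩ hjv⟩
  · intro j
    exact le_trans (him j.1) (himp2 j)
  · have hj0i : j0 ≠ i := by
      intro h
      subst h
      rw [hui_top] at hj0
      rw [hui'_eq] at hj0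
      exact lt_irrefl _ hj0
    exact ⟨⟨j0, hj0i⟩, lt_of_lt_of_le hj0 (himp2 ⟨j0, hj0i⟩)⟩
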